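/- Let g : ℝ → ℝ be defined by g(x) = 0 for x ≤ 0 and g(x) = 2^(2i) + 3·2^i·(x − 2^i) for x > 0, where i ∈ ℤ is the unique integer with 2^i ≤ x < 2^(i+1). Then g is strictly differentiable at 0 with derivative 0; that is, (g(t) − g(u))/(t − u) → 0 as t, u → 0 with t ≠ u (HasStrictDerivAt g 0 0). -/

import Mathlib

open Topology Filter


/-- Example 3.8: the piecewise affine function `g`, defined by `g x = 0` for `x ≤ 0` and
`g x = 2^(2*i) + 3 * 2^i * (x - 2^i)` for `x > 0`, where `i : ℤ` is the unique integer
with `2^i ≤ x < 2^(i+1)`, is strictly differentiable at `0` with derivative `0`. -/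
theorem hasStrictDerivAt_piecewise_affine_g (g : ℝ → ℝ)
    (h0 : ∀ x : ℝ, x ≤ 0 → g x = 0)
    (h1 : ∀ (x : ℝ) (i : ℤ), (2 : ℝ) ^ i ≤ x → x < (2 : ℝ) ^ (i + 1) →
      g x = (2 : ℝ) ^ (2 * i) + 3 * (2 : ℝ) ^ i * (x - (2 : ℝ) ^ i)) :
    HasStrictDerivAt g 0 0 := by
  have two_ne : (2:ℝ) ≠ 0 := by norm_num
  have cast2 : ((2:ℕ):ℝ) = 2 := by norm_num
  have key : ∀ u t : ℝ, u ≤ t → 0 ≤ g t - g u ∧ g t - g u ≤ 3 * |t| * (t - u) := by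
    intro u t hut
    rcases le_or_gt t 0 with ht | ht
    · rw [h0 t ht, h0 u (hut.trans ht)]
      refine ⟨by simp, ?_⟩
      have h1' : 0 ≤ t - u := sub_nonneg.2 hut
      have := abs_nonneg t
      nlinarith
    · have habst : |t| = t := abs_of_pos ht
      set j := Int.log 2 t with hj
      have ht1 : (2:ℝ)^j ≤ t := by
        have := Int.zpow_log_le_self (R := ℝ) (b := 2) (by norm_num) ht
        rwa [cast2] at this
      have ht2 : t < 2 * (2:ℝ)^j := by
        have := Int.lt_zpow_succ_log_self (R := ℝ) (b := 2) (by norm_num) t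
        rwa [cast2, zpow_add_one₀ two_ne, mul_comm] at this
      have hgt : g t = 3 * (2:ℝ)^j * t - 2 * ((2:ℝ)^j * (2:ℝ)^j) := by
        rw [h1 t j ht1 (by rwa [zpow_add_one₀ two_ne, mul_comm]), two_mul,
          zpow_add₀ two_ne]
        ring
      have hc : (0:ℝ) < (2:ℝ)^j := by positivity
      rcases le_or_gt u 0 with hu | hu
      · rw [h0 u hu, hgt, habst]
        constructor <;> nlinarith
      · set i := Int.log 2 u with hi
        have hu1 : (2:ℝ)^i ≤ u := by
          have := Int.zpow_log_le_self (R := ℝ) (b := 2) (by norm_num) hu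
          rwa [cast2] at this
        have hu2 : u < 2 * (2:ℝ)^i := by
          have := Int.lt_zpow_succ_log_self (R := ℝ) (b := 2) (by norm_num) u
          rwa [cast2, zpow_add_one₀ two_ne, mul_comm] at this
        have hgu : g u = 3 * (2:ℝ)^i * u - 2 * ((2:ℝ)^i * (2:ℝ)^i) := by
          rw [h1 u i hu1 (by rwa [zpow_add_one₀ two_ne, mul_comm]), two_mul,
            zpow_add₀ two_ne]
          ring
        have ha : (0:ℝ) < (2:ℝ)^i := by positivity
        have hij : i ≤ j := Int.log_mono_right hu hut
        rcases eq_or_lt_of_le hij with heq | hlt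
        · rw [hgt, hgu, ← heq, habst]
          constructor <;> nlinarith
        · have h2ac : 2 * (2:ℝ)^i ≤ (2:ℝ)^j := by
            have : (2:ℝ)^(i+1) ≤ (2:ℝ)^j := zpow_le_zpow_right₀ one_le_two hlt
            rwa [zpow_add_one₀ two_ne, mul_comm] at this
          have hcases : (2:ℝ)^j = 2 * (2:ℝ)^i ∨ 4 * (2:ℝ)^i ≤ (2:ℝ)^j := by
            rcases eq_or_lt_of_le (show i + 1 ≤ j from hlt) with heq | hlt2
            · left
              rw [← heq, zpow_add_one₀ two_ne]; ring
            · right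
              have : (2:ℝ)^(i+2) ≤ (2:ℝ)^j := zpow_le_zpow_right₀ one_le_two (by omega)
              rw [zpow_add₀ two_ne] at this
              norm_num at this
              nlinarith
          set a := (2:ℝ)^i
          set c := (2:ℝ)^j
          -- claim A : 2 * g u ≥ 3 * c * u - c^2
          have claimA : 3 * c * u - c * c ≤ 2 * (3 * a * u - 2 * (a * a)) := by
            rcases hcases with heq | hle
            · rw [heq]; nlinarith
            · nlinarith [mul_nonneg (sub_nonneg.2 h2ac) (sub_nonneg.2 hle),
                mul_nonneg (sub_nonneg.2 h2ac) (sub_nonneg.2 hu1)]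
          have huc : u < c := lt_of_lt_of_le hu2 h2ac
          rw [hgt, hgu, habst]
          constructor
          · nlinarith
          · nlinarith [sq_nonneg (t - c), mul_nonneg (sub_nonneg.2 huc.le)
              (by nlinarith : (0:ℝ) ≤ 2 * t - c)]
  have bound : ∀ u t : ℝ, |g t - g u| ≤ 3 * (|t| + |u|) * |t - u| := by
    intro u t
    rcases le_total u t with h | h
    · obtain ⟨hb1, hb2⟩ := key u t h
      rw [abs_of_nonneg hb1, abs_of_nonneg (sub_nonneg.2 h)]
      nlinarith [abs_nonneg u, sub_nonneg.2 h]
    · obtain ⟨hb1, hb2⟩ := key t u h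
      rw [abs_sub_comm, abs_of_nonneg hb1, abs_sub_comm t u,
        abs_of_nonneg (sub_nonneg.2 h)]
      nlinarith [abs_nonneg t, sub_nonneg.2 h]
  rw [hasStrictDerivAt_iff_hasStrictFDerivAt, hasStrictFDerivAt_iff_isLittleO]
  rw [Asymptotics.isLittleO_iff]
  intro ε hε
  have hev : ∀ᶠ p : ℝ × ℝ in 𝓝 (0, 0), |p.1| < ε / 6 ∧ |p.2| < ε / 6 := by
    have h6 : 0 < ε / 6 := by linarith
    have h1' : ∀ᶠ x : ℝ in 𝓝 0, |x| < ε / 6 := by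
      filter_upwards [Metric.ball_mem_nhds (0:ℝ) h6] with x hx
      simpa [Real.dist_eq] using hx
    rw [nhds_prod_eq]
    exact (h1'.prod_mk h1').mono fun p hp => hp
  filter_upwards [hev] with p hp
  obtain ⟨hp1, hp2⟩ := hp
  have := bound p.2 p.1
  simp only [ContinuousLinearMap.toSpanSingleton_apply,
    smul_zero, sub_zero, Real.norm_eq_abs]
  calc |g p.1 - g p.2| ≤ 3 * (|p.1| + |p.2|) * |p.1 - p.2| := this
    _ ≤ ε * |p.1 - p.2| := by
        have := abs_nonneg (p.1 - p.2)
        nlinarith [abs_nonneg p.1, abs_nonneg p.2]
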